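/- Let R be a 2-torsion free σ-prime ring, U a nonzero square closed σ-Lie ideal of R, and d a derivation of R commuting with σ that acts as an anti-homomorphism on U (i.e., d(xy) = d(y)d(x) for all x, y ∈ U). Then d = 0 or U ⊆ Z(R). -/
import Mathlib


theorem stmt11 (R : Type*) [Ring R]
  (σ : R → R)
  (hσadd : ∀ x y : R, σ (x + y) = σ x + σ y)
  (hσmul : ∀ x y : R, σ (x * y) = σ y * σ x)
  (hσinv : ∀ x : R, σ (σ x) = x)
  (htor : ∀ x : R, x + x = 0 → x = 0)
  (hsp : ∀ a b : R, (∀ r : R, a * r * b = 0) → (∀ r : R, a * r * σ b = 0) → a = 0 ∨ b = 0)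
  (U : AddSubgroup R)
  (hLie : ∀ u ∈ U, ∀ r : R, u * r - r * u ∈ U)
  (hσU : ∀ u ∈ U, σ u ∈ U)
  (hsq : ∀ u ∈ U, u * u ∈ U)
  (hUnz : ∃ u ∈ U, u ≠ (0 : R))
  (d : R → R)
  (hdadd : ∀ x y : R, d (x + y) = d x + d y)
  (hdmul : ∀ x y : R, d (x * y) = d x * y + x * d y)
  (hdσ : ∀ x : R, d (σ x) = σ (d x))
  (hanti : ∀ x ∈ U, ∀ y ∈ U, d (x * y) = d y * d x) :
    (∀ x : R, d x = 0) ∨ (∀ u ∈ U, ∀ r : R, u * r = r * u) := by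
  -- basic facts about σ and d
  have hσ0 : σ 0 = 0 := by
    have h := hσadd 0 0
    rw [add_zero] at h
    exact (left_eq_add.mp h)
  have hσneg : ∀ x : R, σ (-x) = - σ x := by
    intro x
    have h := hσadd x (-x)
    rw [add_neg_cancel, hσ0] at h
    exact eq_neg_of_add_eq_zero_right h.symm
  have hσsub : ∀ x y : R, σ (x - y) = σ x - σ y := by
    intro x y
    rw [sub_eq_add_neg, hσadd, hσneg, ← sub_eq_add_neg]
  have hd0 : d 0 = 0 := by
    have h := hdadd 0 0
    rw [add_zero] at h
    exact (left_eq_add.mp h)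
  have hdneg : ∀ x : R, d (-x) = - d x := by
    intro x
    have h := hdadd x (-x)
    rw [add_neg_cancel, hd0] at h
    exact eq_neg_of_add_eq_zero_right h.symm
  have hdsub : ∀ x y : R, d (x - y) = d x - d y := by
    intro x y
    rw [sub_eq_add_neg, hdadd, hdneg, ← sub_eq_add_neg]
  have htor2 : ∀ x y : R, x + x = y + y → x = y := by
    intro x y h
    have h2 := htor (x - y) (by linear_combination (norm := noncomm_ring) h)
    exact sub_eq_zero.mp h2
  -- 2uv ∈ U
  have hU2 : ∀ u ∈ U, ∀ v ∈ U, u * v + u * v ∈ U := by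
    intro u hu v hv
    have h1 : (u+v)*(u+v) - u*u - v*v ∈ U :=
      U.sub_mem (U.sub_mem (hsq _ (U.add_mem hu hv)) (hsq u hu)) (hsq v hv)
    have h2 : u*v - v*u ∈ U := hLie u hu v
    have e : u*v + u*v = ((u+v)*(u+v) - u*u - v*v) + (u*v - v*u) := by noncomm_ring
    rw [e]; exact U.add_mem h1 h2
  -- sign-handling helper
  have signσ : ∀ a b : R, (σ b = b ∨ σ b = -b) → (∀ r : R, a * r * b = 0) →
      ∀ r : R, a * r * σ b = 0 := by
    intro a b hb h r
    rcases hb with h'|h'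
    · rw [h']; exact h r
    · rw [h']; have := h r; linear_combination (norm := noncomm_ring) -this
  -- σ-trick: from c R G = 0 with σ-homogeneous c, get c = 0 or G = 0
  have sigmaTrick : ∀ c G : R, (σ c = c ∨ σ c = -c) → (∀ r : R, c * r * G = 0) →
      c = 0 ∨ G = 0 := by
    intro c G hsc h
    have h' : ∀ r : R, σ G * r * c = 0 := by
      intro r
      have h2 := congrArg σ (h (σ r))
      rw [hσ0, hσmul, hσmul, hσinv] at h2
      rcases hsc with hs|hs
      · rw [hs] at h2; linear_combination (norm := noncomm_ring) h2
      · rw [hs] at h2; linear_combination (norm := noncomm_ring) -h2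
    have h'' : ∀ r : R, σ G * r * σ c = 0 := by
      intro r
      rcases hsc with hs|hs
      · rw [hs]; exact h' r
      · rw [hs]; have := h' r; linear_combination (norm := noncomm_ring) -this
    rcases hsp (σ G) c h' h'' with h0|h0
    · right
      have h3 := congrArg σ h0
      rwa [hσinv, hσ0] at h3
    · left; exact h0
  -- key identity (2): d(x) x y = d(x) y d(x)
  have key2 : ∀ x ∈ U, ∀ y ∈ U, d x * (x * y) = d x * y * d x := by
    intro x hx y hy
    have hB1 : d x * y + x * d y = d y * d x := by
      rw [← hdmul]; exact hanti x hx y hy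
    have e1 := hanti x hx (x*y + x*y) (hU2 x hx y hy)
    have hL : d (x * (x*y + x*y)) =
        (d x * (x*y) + x * (d y * d x)) + (d x * (x*y) + x * (d y * d x)) := by
      have hxx : x * (x*y + x*y) = x*(x*y) + x*(x*y) := by noncomm_ring
      rw [hxx, hdadd, hdmul, hanti x hx y hy]
    have hR : d (x*y + x*y) * d x = (d y * d x * d x) + (d y * d x * d x) := by
      rw [hdadd, hanti x hx y hy]; noncomm_ring
    have h2a : d x * (x*y) + x * (d y * d x) = d y * d x * d x := by
      apply htor2
      rw [← hL, ← hR]; exact e1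
    linear_combination (norm := noncomm_ring) h2a - hB1 * d x
  -- key identity (3): d(x) y [d(x), z] = 0
  have key3 : ∀ x ∈ U, ∀ y ∈ U, ∀ z ∈ U, d x * y * (d x * z - z * d x) = 0 := by
    intro x hx y hy z hz
    have h1 := key2 x hx y hy
    have h2 : d x * (x * (y*z)) = d x * (y*z) * d x := by
      have h3 := key2 x hx (y*z + y*z) (hU2 y hy z hz)
      apply htor2
      linear_combination (norm := noncomm_ring) h3
    linear_combination (norm := noncomm_ring) h2 - h1 * z
  -- Lemma A: if U is commutative then U is central
  have lemA : (∀ u ∈ U, ∀ v ∈ U, u * v = v * u) → ∀ u ∈ U, ∀ r : R, u * r = r * u := by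
    intro hc
    have A1 : ∀ w ∈ U, ∀ r s : R, (w*r - r*w) * (w*s - s*w) = 0 := by
      intro w hw r s
      have h1 := hc w hw _ (hLie w hw r)
      have h2 := hc w hw _ (hLie w hw s)
      have h3 := hc w hw _ (hLie w hw (r*s))
      apply htor
      linear_combination (norm := noncomm_ring) h3 - h1 * s - r * h2
    have A2 : ∀ w ∈ U, ∀ r s t : R, (w*r - r*w) * s * (w*t - t*w) = 0 := by
      intro w hw r s t
      have h1 := A1 w hw r (s*t)
      have h2 := A1 w hw r s
      linear_combination (norm := noncomm_ring) h1 - h2 * t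
    have A4 : ∀ w ∈ U, (σ w = w ∨ σ w = -w) → ∀ t : R, w * t = t * w := by
      intro w hw hsw t
      have h1 : ∀ s : R, (w*t - t*w) * s * (w*t - t*w) = 0 := fun s => A2 w hw t s t
      have h2 : ∀ s : R, (w*t - t*w) * s * σ (w*t - t*w) = 0 := by
        intro s
        have e : σ (w*t - t*w) = σ t * σ w - σ w * σ t := by rw [hσsub, hσmul, hσmul]
        rcases hsw with h|h
        · rw [e, h]; have := A2 w hw t s (σ t)
          linear_combination (norm := noncomm_ring) -this
        · rw [e, h]; have := A2 w hw t s (σ t)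
          linear_combination (norm := noncomm_ring) this
      rcases hsp _ _ h1 h2 with h|h <;> exact sub_eq_zero.mp h
    intro u hu r
    have h1 := A4 (u + σ u) (U.add_mem hu (hσU u hu))
      (Or.inl (by rw [hσadd, hσinv, add_comm])) r
    have h2 := A4 (u - σ u) (U.sub_mem hu (hσU u hu))
      (Or.inr (by rw [hσsub, hσinv, neg_sub])) r
    exact htor2 _ _ (by linear_combination (norm := noncomm_ring) h1 + h2)
  by_cases hZ : ∀ u ∈ U, ∀ r : R, u * r = r * u
  · exact Or.inr hZ
  left
  -- get a noncommuting pair inside U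
  have hexq : ∃ us ∈ U, ∃ vs ∈ U, us * vs ≠ vs * us := by
    by_contra h
    push_neg at h
    exact hZ (lemA h)
  obtain ⟨us, hus, vs, hvs, hqne⟩ := hexq
  have hqne' : us * vs - vs * us ≠ 0 := sub_ne_zero.mpr hqne
  -- centralizer lemma: anything (with its σ-image) centralizing U is central
  have lemC : ∀ a : R, (∀ u ∈ U, u * a = a * u) → (∀ u ∈ U, u * σ a = σ a * u) →
      ∀ t : R, a * t = t * a := by
    intro a ha haσ t
    have M0 : ∀ b : R, (∀ u ∈ U, u * b = b * u) → ∀ u ∈ U, ∀ s t' : R,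
        (u*s - s*u) * (t'*b - b*t') + (s*b - b*s) * (u*t' - t'*u) = 0 := by
      intro b hb u hu s t'
      have e1 := hb _ (hLie u hu s)
      have e2 := hb _ (hLie u hu (s*t'))
      have e3 := hb _ (hLie u hu t')
      linear_combination (norm := noncomm_ring) e2 - e1 * t' - s * e3
    have M1 : ∀ b : R, (∀ u ∈ U, u * b = b * u) → ∀ u ∈ U, ∀ u' ∈ U, ∀ t' : R,
        (u*u' - u'*u) * (t'*b - b*t') = 0 := by
      intro b hb u hu u' hu' t'
      have h0 := M0 b hb u hu u' t'
      have h1 := hb u' hu'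
      linear_combination (norm := noncomm_ring) h0 - h1 * (u*t' - t'*u)
    have M2 : ∀ b : R, (∀ u ∈ U, u * b = b * u) → ∀ u ∈ U, ∀ u' ∈ U, ∀ r t' : R,
        (u*u' - u'*u) * r * (t'*b - b*t') = 0 := by
      intro b hb u hu u' hu' r t'
      have j1 := M1 b hb u hu u' hu' (r*t')
      have j2 := M1 b hb u hu u' hu' r
      linear_combination (norm := noncomm_ring) j1 - j2 * t'
    have h1 : ∀ r : R, (us*vs - vs*us) * r * (t*a - a*t) = 0 :=
      fun r => M2 a ha us hus vs hvs r t
    have h2 : ∀ r : R, (us*vs - vs*us) * r * σ (t*a - a*t) = 0 := by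
      intro r
      have e : σ (t*a - a*t) = σ a * σ t - σ t * σ a := by rw [hσsub, hσmul, hσmul]
      rw [e]
      have h3 := M2 (σ a) haσ us hus vs hvs r (σ t)
      linear_combination (norm := noncomm_ring) -h3
    rcases hsp _ _ h1 h2 with h|h
    · exact absurd h hqne'
    · exact (sub_eq_zero.mp h).symm
  -- core chain
  have core : ∀ c B : R, (σ c = c ∨ σ c = -c) → (σ B = B ∨ σ B = -B) →
      (∀ y ∈ U, c * y * B = 0) → c ≠ 0 → B ≠ 0 →
      ∀ u ∈ U, ∀ v ∈ U, u * v = v * u := by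
    intro c B hσc hσB cyB hc0 hB0
    have hL3 : ∀ u ∈ U, ∀ s : R, u * B * s * B = B * s * u * B := by
      intro u hu s
      have hG : ∀ r : R, c * r * (u*B*s*B - B*s*u*B) = 0 := by
        intro r
        have h1 := cyB (u*(r*B*s) - (r*B*s)*u) (hLie u hu _)
        have h2 := cyB (u*r - r*u) (hLie u hu r)
        linear_combination (norm := noncomm_ring) h1 - h2 * (s*B)
      rcases sigmaTrick c _ hσc hG with h|h
      · exact absurd h hc0
      · exact sub_eq_zero.mp h
    have hL4 : ∀ u ∈ U, ∀ v ∈ U, ∀ s : R, B * s * (u*v - v*u) * B = 0 := by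
      intro u hu v hv s
      have h2uv := hL3 (u*v + u*v) (hU2 u hu v hv) s
      have hA : u*v*B*s*B = B*s*(u*v)*B := by
        apply htor2
        linear_combination (norm := noncomm_ring) h2uv
      have hB' := hL3 v hv s
      have hC := hL3 u hu (s*v)
      linear_combination (norm := noncomm_ring) u * hB' + hC - hA
    have hqB0 : ∀ u ∈ U, ∀ v ∈ U, (u*v - v*u) * B = 0 := by
      intro u hu v hv
      have hq' : u*v - v*u ∈ U := hLie u hu v
      have h1 : ∀ s : R, (u*v - v*u) * B * s * B = 0 := by
        intro s
        have h := hL3 _ hq' s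
        rw [h]
        exact hL4 u hu v hv s
      rcases hsp ((u*v - v*u) * B) B h1 (signσ _ _ hσB h1) with h|h
      · exact h
      · exact absurd h hB0
    have hP1 : ∀ u ∈ U, ∀ v ∈ U, ∀ r : R,
        ((u*v - v*u)*r - r*(u*v - v*u)) * B = 0 := by
      intro u hu v hv r
      have j1 := hqB0 u hu (v*r - r*v) (hLie v hv r)
      have j2 := hqB0 v hv (u*r - r*u) (hLie u hu r)
      linear_combination (norm := noncomm_ring) j1 - j2
    have hP2 : ∀ u ∈ U, ∀ v ∈ U, ∀ r s : R,
        ((u*v - v*u)*r - r*(u*v - v*u)) * s * B = 0 := by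
      intro u hu v hv r s
      have j1 := hP1 u hu v hv (r*s)
      have j2 := hP1 u hu v hv s
      linear_combination (norm := noncomm_ring) j1 - r * j2
    have hqZ : ∀ u ∈ U, ∀ v ∈ U, ∀ r : R, (u*v - v*u)*r = r*(u*v - v*u) := by
      intro u hu v hv r
      rcases hsp _ B (hP2 u hu v hv r) (signσ _ _ hσB (hP2 u hu v hv r)) with h|h
      · exact sub_eq_zero.mp h
      · exact absurd h hB0
    have hqRB : ∀ u ∈ U, ∀ v ∈ U, ∀ r : R, (u*v - v*u) * r * B = 0 := by
      intro u hu v hv r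
      have h1 := hqZ u hu v hv r
      have h2 := hqB0 u hu v hv
      linear_combination (norm := noncomm_ring) h1 * B + r * h2
    intro u hu v hv
    rcases hsp _ B (hqRB u hu v hv) (signσ _ _ hσB (hqRB u hu v hv)) with h|h
    · exact sub_eq_zero.mp h
    · exact absurd h hB0
  -- [d x, z] = 0 for σ-homogeneous x z
  have keyB : ∀ x ∈ U, (σ x = x ∨ σ x = -x) → ∀ z ∈ U, (σ z = z ∨ σ z = -z) →
      d x * z = z * d x := by
    intro x hx hσx z hz hσz
    by_cases hc0 : d x = 0
    · rw [hc0]; rw [zero_mul, mul_zero]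
    by_cases hB0 : d x * z - z * d x = 0
    · exact sub_eq_zero.mp hB0
    have hσc : σ (d x) = d x ∨ σ (d x) = -(d x) := by
      rcases hσx with h|h
      · left; rw [← hdσ, h]
      · right; rw [← hdσ, h, hdneg]
    have hσB : σ (d x * z - z * d x) = (d x * z - z * d x) ∨
        σ (d x * z - z * d x) = -(d x * z - z * d x) := by
      have e : σ (d x * z - z * d x) = σ z * σ (d x) - σ (d x) * σ z := by
        rw [hσsub, hσmul, hσmul]
      rcases hσc with h1|h1 <;> rcases hσz with h2|h2
      · right; rw [e, h1, h2]; noncomm_ring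
      · left; rw [e, h1, h2]; noncomm_ring
      · left; rw [e, h1, h2]; noncomm_ring
      · right; rw [e, h1, h2]; noncomm_ring
    have cyB : ∀ y ∈ U, d x * y * (d x * z - z * d x) = 0 :=
      fun y hy => key3 x hx y hy z hz
    have hUUcomm := core (d x) (d x * z - z * d x) hσc hσB cyB hc0 hB0
    exact absurd (lemA hUUcomm) hZ
  -- d(U) centralizes U
  have hC1 : ∀ x ∈ U, ∀ z ∈ U, d x * z = z * d x := by
    have step1 : ∀ x ∈ U, (σ x = x ∨ σ x = -x) → ∀ z ∈ U, d x * z = z * d x := by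
      intro x hx hσx z hz
      have h1 := keyB x hx hσx (z + σ z) (U.add_mem hz (hσU z hz))
        (Or.inl (by rw [hσadd, hσinv, add_comm]))
      have h2 := keyB x hx hσx (z - σ z) (U.sub_mem hz (hσU z hz))
        (Or.inr (by rw [hσsub, hσinv, neg_sub]))
      exact htor2 _ _ (by linear_combination (norm := noncomm_ring) h1 + h2)
    intro x hx z hz
    have h1 := step1 (x + σ x) (U.add_mem hx (hσU x hx))
      (Or.inl (by rw [hσadd, hσinv, add_comm])) z hz
    have h2 := step1 (x - σ x) (U.sub_mem hx (hσU x hx))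
      (Or.inr (by rw [hσsub, hσinv, neg_sub])) z hz
    rw [hdadd] at h1
    rw [hdsub] at h2
    exact htor2 _ _ (by linear_combination (norm := noncomm_ring) h1 + h2)
  -- d(U) ⊆ Z
  have hdUZ : ∀ x ∈ U, ∀ t : R, d x * t = t * d x := by
    intro x hx
    exact lemC (d x) (fun u hu => (hC1 x hx u hu).symm)
      (fun u hu => by rw [← hdσ]; exact (hC1 (σ x) (hσU x hx) u hu).symm)
  -- N1
  have hN1 : ∀ x ∈ U, ∀ z ∈ U, ∀ r : R,
      d x * (z*r - r*z) + d z * (x*r - r*x) = 0 := by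
    intro x hx z hz r
    have hB1 : d x * z + x * d z = d z * d x := by
      rw [← hdmul]; exact hanti x hx z hz
    have cx := hdUZ x hx
    have cz := hdUZ z hz
    linear_combination (norm := noncomm_ring) hB1 * r - r * hB1 + (cz x) * r
      - cz (r*x) + d z * (cx r) + (cz r) * d x - (cx r) * z
  have hN2 : ∀ x ∈ U, ∀ r : R, d x * (x*r - r*x) = 0 := by
    intro x hx r
    exact htor2 _ 0 (by linear_combination (norm := noncomm_ring) hN1 x hx x hx r)
  have hN3 : ∀ x ∈ U, ∀ w ∈ U, ∀ r : R, d x * d x * (w*r - r*w) = 0 := by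
    intro x hx w hw r
    have n1 := hN1 x hx w hw r
    have comm : d x * d w = d w * d x := hdUZ x hx (d w)
    have n2 := hN2 x hx r
    linear_combination (norm := noncomm_ring) d x * n1 - comm * (x*r - r*x) - d w * n2
  have hN4 : ∀ x ∈ U, d x * d x = 0 := by
    intro x hx
    have cx := hdUZ x hx
    have h1 : ∀ r : R, d x * d x * r * (us*vs - vs*us) = 0 := by
      intro r
      have h := hN3 x hx us hus (vs)
      linear_combination (norm := noncomm_ring) d x * (cx r) * (us*vs - vs*us)
        + (cx r) * (d x * (us*vs - vs*us)) + r * h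
    have h2 : ∀ r : R, d x * d x * r * σ (us*vs - vs*us) = 0 := by
      intro r
      have e : σ (us*vs - vs*us) = σ vs * σ us - σ us * σ vs := by
        rw [hσsub, hσmul, hσmul]
      rw [e]
      have h := hN3 x hx (σ us) (hσU us hus) (σ vs)
      linear_combination (norm := noncomm_ring) d x * (cx r) * (σ vs * σ us - σ us * σ vs)
        + (cx r) * (d x * (σ vs * σ us - σ us * σ vs)) - r * h
    rcases hsp (d x * d x) (us*vs - vs*us) h1 h2 with h|h
    · exact h
    · exact absurd h hqne'
  have hN5 : ∀ x ∈ U, d x * d (σ x) = 0 := by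
    intro x hx
    have h := hN4 (x + σ x) (U.add_mem hx (hσU x hx))
    rw [hdadd] at h
    have hx2 := hN4 x hx
    have hy2 := hN4 (σ x) (hσU x hx)
    have comm : d x * d (σ x) = d (σ x) * d x := hdUZ x hx (d (σ x))
    apply htor
    linear_combination (norm := noncomm_ring) h - hx2 - hy2 + comm
  have hC3 : ∀ x ∈ U, d x = 0 := by
    intro x hx
    have cx := hdUZ x hx
    have h1 : ∀ r : R, d x * r * d x = 0 := by
      intro r
      have h := hN4 x hx
      linear_combination (norm := noncomm_ring) (cx r) * d x + r * h
    have h2 : ∀ r : R, d x * r * σ (d x) = 0 := by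
      intro r
      rw [← hdσ]
      have h := hN5 x hx
      linear_combination (norm := noncomm_ring) (cx r) * d (σ x) + r * h
    rcases hsp (d x) (d x) h1 h2 with h|h <;> exact h
  -- extension to all of R
  have hE1 : ∀ u ∈ U, ∀ r : R, u * d r = d r * u := by
    intro u hu r
    have h := hC3 (u*r - r*u) (hLie u hu r)
    rw [hdsub, hdmul, hdmul, hC3 u hu] at h
    linear_combination (norm := noncomm_ring) h
  have hE2 : ∀ r t : R, d r * t = t * d r := by
    intro r
    exact lemC (d r) (fun u hu => hE1 u hu r)
      (fun u hu => by rw [← hdσ]; exact hE1 u hu (σ r))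
  have hE3 : ∀ u ∈ U, ∀ s r : R, (u*s - s*u) * d r = 0 := by
    intro u hu s r
    have hdur : d (u*r) = u * d r := by
      rw [hdmul, hC3 u hu, zero_mul, zero_add]
    have h1 : u * d r * s = s * (u * d r) := by
      rw [← hdur]; exact hE2 (u*r) s
    have h2 := hE2 r s
    linear_combination (norm := noncomm_ring) h1 - u * h2
  intro r
  have h1 : ∀ t : R, (us*vs - vs*us) * t * d r = 0 := by
    intro t
    have e3 := hE3 us hus vs r
    have h2 := hE2 r t
    linear_combination (norm := noncomm_ring) e3 * t - (us*vs - vs*us) * h2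
  have h2 : ∀ t : R, (us*vs - vs*us) * t * σ (d r) = 0 := by
    intro t
    rw [← hdσ]
    have e3 := hE3 us hus vs (σ r)
    have h2' := hE2 (σ r) t
    linear_combination (norm := noncomm_ring) e3 * t - (us*vs - vs*us) * h2'
  rcases hsp _ (d r) h1 h2 with h|h
  · exact absurd h hqne'
  · exact h
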